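/- arXiv:1610.08387 — 4 statements merged into one kernel-verified Lean document; each statement's English description precedes it below -/
import Mathlib

section
/- Let F ⊣ G be an adjunction between idempotent complete categories realizing a monad A = GF. If the counit of the Eilenberg–Moore adjunction F_A ⊣ U_A is a split epimorphism at every algebra of the form E(d), the natural comparison functor K : Kleisli(A) → D from the Kleisli category is essentially surjective up to retracts: every object of D is a retract of an object in the essential image of K, provided G is conservative. -/
open CategoryTheory

variable {C D : Type*} [Category C] [Category D]

/-- The Kleisli comparison functor `K : Kleisli(GF) ⥤ D` of an adjunction `F ⊣ G`,
sending `x` to `F x`; it satisfies `K ∘ F_A = F` and `G ∘ K = U_A`. -/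
def kleisliComparison {F : C ⥤ D} {G : D ⥤ C} (adj : F ⊣ G) :
    Kleisli adj.toMonad ⥤ D where
  obj X := F.obj X.of
  map {X Y} f := F.map f.of ≫ adj.counit.app (F.obj Y.of)
  map_id X := by
    change F.map (adj.unit.app X.of) ≫ adj.counit.app (F.obj X.of) = _
    simp
  map_comp {X Y Z} f g := by
    change F.map (f.of ≫ G.map (F.map g.of) ≫ G.map (adj.counit.app _)) ≫ _ = _
    have h : ∀ {a b c : C} (u : a ⟶ G.obj (F.obj b)) (v : b ⟶ G.obj (F.obj c)),
        F.map (u ≫ G.map (F.map v) ≫ G.map (adj.counit.app (F.obj c))) ≫ adj.counit.app (F.obj c) =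
          (F.map u ≫ adj.counit.app (F.obj b)) ≫ F.map v ≫ adj.counit.app (F.obj c) := by
      intros
      simp
    exact h f.of g.of

/-- If `C` and `D` are idempotent complete, `G` is conservative, and the Eilenberg–Moore
counit admits a section at every algebra of the form `E(d)`, then every object of `D` is a
retract of an object in the (essential) image of the Kleisli comparison functor. -/
theorem retract_of_kleisli_image
    [IsIdempotentComplete C] [IsIdempotentComplete D]
    {F : C ⥤ D} {G : D ⥤ C} (adj : F ⊣ G) [G.ReflectsIsomorphisms]
    (h : ∀ d : D,
      IsSplitEpi (adj.toMonad.adj.counit.app ((Monad.comparison adj).obj d)))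
    (d : D) :
    ∃ (x : Kleisli adj.toMonad) (i : d ⟶ (kleisliComparison adj).obj x)
      (r : (kleisliComparison adj).obj x ⟶ d), i ≫ r = 𝟙 d := by
  have hse := h d
  set σ : ((Monad.comparison adj).obj d) ⟶
      adj.toMonad.free.obj (adj.toMonad.forget.obj ((Monad.comparison adj).obj d)) :=
    hse.exists_splitEpi.some.section_ with hσdef
  have hσ : σ ≫ adj.toMonad.adj.counit.app ((Monad.comparison adj).obj d) = 𝟙 _ :=
    hse.exists_splitEpi.some.id
  set s : G.obj d ⟶ G.obj (F.obj (G.obj d)) := σ.f with hsdef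
  have hs1 : s ≫ G.map (adj.counit.app d) = 𝟙 (G.obj d) := by
    have := congrArg Monad.Algebra.Hom.f hσ
    rw [Monad.Algebra.comp_f, Monad.Algebra.id_f] at this
    simp at this
    exact this
  have hs2 : G.map (F.map s) ≫ G.map (adj.counit.app (F.obj (G.obj d)))
      = G.map (adj.counit.app d) ≫ s := by
    have := σ.h
    exact this
  have hn : ∀ {X Y : D} (f : X ⟶ Y),
      adj.counit.app X ≫ f = F.map (G.map f) ≫ adj.counit.app Y := by
    intro X Y f
    exact (adj.counit.naturality f).symm
  set e : F.obj (G.obj d) ⟶ F.obj (G.obj d) :=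
    F.map s ≫ adj.counit.app (F.obj (G.obj d)) with hedef
  have he : e ≫ e = e := by
    calc e ≫ e = F.map s ≫ F.map (G.map (F.map s)) ≫
            F.map (G.map (adj.counit.app (F.obj (G.obj d)))) ≫
            adj.counit.app (F.obj (G.obj d)) := by
          rw [hedef, Category.assoc,
            ← Category.assoc (adj.counit.app (F.obj (G.obj d))) (F.map s),
            hn (F.map s), Category.assoc,
            hn (X := F.obj (G.obj (F.obj (G.obj d)))) (adj.counit.app (F.obj (G.obj d)))]
          rfl
      _ = F.map (s ≫ G.map (F.map s) ≫ G.map (adj.counit.app (F.obj (G.obj d)))) ≫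
            adj.counit.app (F.obj (G.obj d)) := by
          rw [F.map_comp, F.map_comp, Category.assoc, Category.assoc]
      _ = F.map (s ≫ G.map (adj.counit.app d) ≫ s) ≫ adj.counit.app (F.obj (G.obj d)) := by
          rw [hs2]
      _ = e := by
          rw [← Category.assoc s, hs1, Category.id_comp, hedef]
  obtain ⟨Y, ι, p, h1, h2⟩ := IsIdempotentComplete.idempotents_split (F.obj (G.obj d)) e he
  have heps : e ≫ adj.counit.app d = adj.counit.app d := by
    rw [hedef, Category.assoc, hn (X := F.obj (G.obj d)) (adj.counit.app d), ← F.map_comp_assoc, hs1, F.map_id,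
      Category.id_comp]
    rfl
  set φ : Y ⟶ d := ι ≫ adj.counit.app d with hφdef
  have hGe : G.map e = G.map (adj.counit.app d) ≫ s := by
    rw [hedef, G.map_comp, hs2]
  have hiso : IsIso (G.map φ) := by
    refine ⟨s ≫ G.map p, ?_, ?_⟩
    · calc G.map φ ≫ s ≫ G.map p
          = G.map ι ≫ (G.map (adj.counit.app d) ≫ s) ≫ G.map p := by
            rw [hφdef, G.map_comp, Category.assoc, Category.assoc]
        _ = G.map ι ≫ G.map (p ≫ ι) ≫ G.map p := by rw [← hGe, h2]
        _ = G.map (ι ≫ p) ≫ G.map (ι ≫ p) := by simp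
        _ = 𝟙 _ := by rw [h1, G.map_id, Category.id_comp]
    · calc (s ≫ G.map p) ≫ G.map φ
          = s ≫ G.map (p ≫ ι) ≫ G.map (adj.counit.app d) := by
            rw [hφdef, G.map_comp, G.map_comp]
            simp
        _ = s ≫ (G.map (adj.counit.app d) ≫ s) ≫ G.map (adj.counit.app d) := by
            rw [h2, hGe]
        _ = 𝟙 _ := by
            rw [Category.assoc,
              ← Category.assoc s (G.map (adj.counit.app d)) (s ≫ G.map (adj.counit.app d)),
              hs1, Category.id_comp]
  have : IsIso φ := isIso_of_reflects_iso φ G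
  refine ⟨Kleisli.mk adj.toMonad (G.obj d), inv φ ≫ ι, adj.counit.app d, ?_⟩
  change (inv φ ≫ ι : d ⟶ F.obj (G.obj d)) ≫ adj.counit.app d = 𝟙 d
  rw [Category.assoc, ← hφdef, IsIso.inv_hom_id]
end

section
/- Let C be an idempotent complete triangulated category with a monad A whose Eilenberg–Moore adjunction F_A ⊣ U_A is a triangulated realization of A. Let F : C ⇄ D : G be any triangulated realization of the same monad A with D idempotent complete and G conservative. Then the Eilenberg–Moore comparison functor E : D → Alg(A) is an equivalence of categories, i.e. the adjunction F ⊣ G is monadic. -/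
open CategoryTheory Limits Pretriangulated

/-- **Essential monadicity.** Let `C` be an idempotent complete triangulated category and
`A = GF` a monad on `C` whose Eilenberg–Moore adjunction `F_A ⊣ U_A` is triangulated. If
`F : C ⇄ D : G` is a triangulated realization of `A` with `D` idempotent complete and `G`
conservative, then the Eilenberg–Moore comparison functor `E : D ⥤ Alg(A)` is an
equivalence, i.e. the adjunction `F ⊣ G` is monadic. -/
theorem essential_monadicity
    {C D : Type*} [Category C] [Category D]
    [HasZeroObject C] [HasZeroObject D] [Preadditive C] [Preadditive D]
    [HasShift C ℤ] [HasShift D ℤ]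
    [∀ n : ℤ, (CategoryTheory.shiftFunctor C n).Additive]
    [∀ n : ℤ, (CategoryTheory.shiftFunctor D n).Additive]
    [Pretriangulated C] [Pretriangulated D]
    [IsIdempotentComplete C] [IsIdempotentComplete D]
    (F : C ⥤ D) (G : D ⥤ C)
    [F.Additive] [F.CommShift ℤ] [F.IsTriangulated]
    [G.Additive] [G.CommShift ℤ] [G.IsTriangulated] [G.ReflectsIsomorphisms]
    (adj : F ⊣ G)
    -- the Eilenberg–Moore category of the monad `A = GF` is triangulated…
    [HasZeroObject adj.toMonad.Algebra] [Preadditive adj.toMonad.Algebra]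
    [HasShift adj.toMonad.Algebra ℤ]
    [∀ n : ℤ, (CategoryTheory.shiftFunctor adj.toMonad.Algebra n).Additive]
    [Pretriangulated adj.toMonad.Algebra]
    -- …in such a way that the free-forgetful adjunction `F_A ⊣ U_A` is triangulated
    [adj.toMonad.forget.Additive] [adj.toMonad.forget.CommShift ℤ]
    [adj.toMonad.forget.IsTriangulated]
    [adj.toMonad.free.Additive] [adj.toMonad.free.CommShift ℤ]
    [adj.toMonad.free.IsTriangulated] :
    (Monad.comparison adj).IsEquivalence := by
  set E := Monad.comparison adj with hE
  -- `E` is injective on morphisms out of free objects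
  have inj : ∀ {c : C} {X : D} (f g : F.obj c ⟶ X), E.map f = E.map g → f = g := by
    intro c X f g h
    have hG : G.map f = G.map g := congrArg Monad.Algebra.Hom.f h
    rw [← (adj.homEquiv c X).symm_apply_apply f, ← (adj.homEquiv c X).symm_apply_apply g,
      adj.homEquiv_unit, adj.homEquiv_unit, hG]
  -- `E` is surjective on morphisms out of free objects
  have surj : ∀ {c : C} {X : D} (φ : E.obj (F.obj c) ⟶ E.obj X),
      ∃ f : F.obj c ⟶ X, E.map f = φ := by
    intro c X φ
    refine ⟨F.map (adj.unit.app c ≫ φ.f) ≫ adj.counit.app X, ?_⟩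
    ext
    show G.map (F.map (adj.unit.app c ≫ φ.f) ≫ adj.counit.app X) = φ.f
    have key : ∀ (φf : G.obj (F.obj c) ⟶ G.obj X), G.map (F.map φf) ≫ G.map (adj.counit.app X)
        = G.map (adj.counit.app (F.obj c)) ≫ φf →
        G.map (F.map (adj.unit.app c ≫ φf) ≫ adj.counit.app X) = φf := by
      intro φf hφ
      calc G.map (F.map (adj.unit.app c ≫ φf) ≫ adj.counit.app X)
          = G.map (F.map (adj.unit.app c)) ≫
              (G.map (F.map φf) ≫ G.map (adj.counit.app X)) := by
            simp only [Functor.map_comp, Category.assoc]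
        _ = G.map (F.map (adj.unit.app c)) ≫
              (G.map (adj.counit.app (F.obj c)) ≫ φf) := by rw [hφ]
        _ = G.map (F.map (adj.unit.app c) ≫ adj.counit.app (F.obj c)) ≫ φf := by
            simp only [Functor.map_comp, Category.assoc]
        _ = φf := by
          rw [show F.map (adj.unit.app c) ≫ adj.counit.app (F.obj c) = 𝟙 _ from
            adj.left_triangle_components c]; simp
    exact key φ.f φ.h
  -- the counit of the Eilenberg-Moore adjunction is a split epi (Alg(A) is pretriangulated)
  have algSplit : ∀ M : adj.toMonad.Algebra, IsSplitEpi (adj.toMonad.adj.counit.app M) := by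
    intro M
    have h1 : IsSplitEpi M.a := IsSplitEpi.mk' ⟨adj.toMonad.η.app M.A, M.unit⟩
    have h2 : (adj.toMonad.adj.counit.app M).f = M.a := by simp [Monad.adj]; exact Category.id_comp _
    have h3 : Epi (adj.toMonad.forget.map (adj.toMonad.adj.counit.app M)) := by
      show Epi (adj.toMonad.adj.counit.app M).f
      rw [h2]; exact h1.epi _
    haveI h4 : Epi (adj.toMonad.adj.counit.app M) := adj.toMonad.forget.epi_of_epi_map h3
    exact isSplitEpi_of_epi _
  -- `E` of the counit of `adj` is the counit of the Eilenberg-Moore adjunction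
  have hcu : ∀ X : D, E.map (adj.counit.app X) = adj.toMonad.adj.counit.app (E.obj X) := by
    intro X
    ext
    show G.map (adj.counit.app X) = _
    simp [Monad.adj]
    exact (Category.id_comp _).symm
  -- the counit of `adj` is a split epi
  have counitSplit : ∀ X : D, IsSplitEpi (adj.counit.app X) := by
    intro X
    obtain ⟨s, hs⟩ : ∃ s : E.obj X ⟶ E.obj (F.obj (G.obj X)), s ≫
        (adj.toMonad.adj.counit.app (E.obj X) : E.obj (F.obj (G.obj X)) ⟶ E.obj X) = 𝟙 (E.obj X) :=
      ⟨_, (algSplit (E.obj X)).exists_splitEpi.some.id⟩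
    set εA : E.obj (F.obj (G.obj X)) ⟶ E.obj X := adj.toMonad.adj.counit.app (E.obj X) with hεA
    obtain ⟨e', he'⟩ := surj (c := G.obj X) (X := F.obj (G.obj X)) (εA ≫ s)
    have hee : e' ≫ e' = e' := by
      apply inj
      rw [Functor.map_comp, he', Category.assoc, ← Category.assoc s, hs, Category.id_comp]
    obtain ⟨X', i, r, hir, hri⟩ :=
      IsIdempotentComplete.idempotents_split (F.obj (G.obj X)) e' hee
    set f := i ≫ adj.counit.app X with hf
    have hEf : E.map f = E.map i ≫ εA := by rw [hf, Functor.map_comp, hcu]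
    haveI : IsIso (E.map f) := by
      refine ⟨s ≫ E.map r, ?_, ?_⟩
      · calc E.map f ≫ s ≫ E.map r
            = E.map i ≫ (εA ≫ s) ≫ E.map r := by rw [hEf]; simp only [Category.assoc]
          _ = E.map i ≫ E.map e' ≫ E.map r := by rw [← he']
          _ = E.map ((i ≫ r) ≫ (i ≫ r)) := by
              rw [← hri]; simp only [Functor.map_comp, Category.assoc]
          _ = 𝟙 _ := by rw [hir, Category.id_comp, CategoryTheory.Functor.map_id]
      · calc (s ≫ E.map r) ≫ E.map f
            = s ≫ (E.map r ≫ E.map i) ≫ εA := by rw [hEf]; simp only [Category.assoc]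
          _ = s ≫ E.map e' ≫ εA := by rw [← Functor.map_comp, hri]
          _ = s ≫ (εA ≫ s) ≫ εA := by rw [he']
          _ = 𝟙 _ := by simp only [← Category.assoc, hs, Category.id_comp]
    haveI : IsIso (G.map f) := by
      have : G.map f = adj.toMonad.forget.map (E.map f) := rfl
      rw [this]; exact Functor.map_isIso adj.toMonad.forget (E.map f)
    haveI : IsIso f := isIso_of_reflects_iso f G
    exact IsSplitEpi.mk' ⟨inv f ≫ i, by
      simp only [Category.assoc, ← hf, IsIso.inv_hom_id]⟩
  have faithful : E.Faithful := by
    constructor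
    intro X Y f g h
    have hG : G.map f = G.map g := congrArg Monad.Algebra.Hom.f h
    haveI := (counitSplit X).epi
    rw [← cancel_epi (adj.counit.app X), ← adj.counit_naturality f, ← adj.counit_naturality g, hG]
  have full : E.Full := by
    constructor
    intro X Y φ
    obtain ⟨h, hh⟩ := surj (E.map (adj.counit.app X) ≫ φ)
    obtain ⟨σ, hσ⟩ := (counitSplit X).exists_splitEpi.some
    refine ⟨σ ≫ h, ?_⟩
    rw [Functor.map_comp, hh, ← Category.assoc, ← Functor.map_comp, hσ]
    simp
  have essSurj : E.EssSurj := by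
    constructor
    intro M
    obtain ⟨s, hs⟩ : ∃ s : M ⟶ E.obj (F.obj M.A), s ≫
        (adj.toMonad.adj.counit.app M : E.obj (F.obj M.A) ⟶ M) = 𝟙 M :=
      ⟨_, (algSplit M).exists_splitEpi.some.id⟩
    set εA : E.obj (F.obj M.A) ⟶ M := adj.toMonad.adj.counit.app M with hεA
    obtain ⟨e', he'⟩ := surj (c := M.A) (X := F.obj M.A) (εA ≫ s)
    have hee : e' ≫ e' = e' := by
      apply inj
      rw [Functor.map_comp, he', Category.assoc, ← Category.assoc s, hs, Category.id_comp]
    obtain ⟨Y, i, r, hir, hri⟩ := IsIdempotentComplete.idempotents_split (F.obj M.A) e' hee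
    refine ⟨Y, ⟨⟨E.map i ≫ εA, s ≫ E.map r, ?_, ?_⟩⟩⟩
    · calc (E.map i ≫ εA) ≫ s ≫ E.map r
          = E.map i ≫ (εA ≫ s) ≫ E.map r := by simp only [Category.assoc]
        _ = E.map i ≫ E.map e' ≫ E.map r := by rw [← he']
        _ = E.map ((i ≫ r) ≫ (i ≫ r)) := by
            rw [← hri]; simp only [Functor.map_comp, Category.assoc]
        _ = 𝟙 _ := by rw [hir, Category.id_comp, CategoryTheory.Functor.map_id]
    · calc (s ≫ E.map r) ≫ E.map i ≫ εA
          = s ≫ (E.map r ≫ E.map i) ≫ εA := by simp only [Category.assoc]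
        _ = s ≫ E.map e' ≫ εA := by rw [← Functor.map_comp, hri]
        _ = s ≫ (εA ≫ s) ≫ εA := by rw [he']
        _ = 𝟙 _ := by simp only [← Category.assoc, hs, Category.id_comp]
  exact { faithful := faithful, full := full, essSurj := essSurj }
end

section
/- Let G : D → C be an exact functor between triangulated categories admitting a left adjoint, with C idempotent complete. Then G factors through the idempotent completion of the Verdier quotient D/Ker(G): there exists a functor G̃ : (D/Ker G)^♮ → C extending G, and G̃ is conservative. -/
open CategoryTheory Limits Pretriangulated Idempotents

namespace FactorKaroubiAux

set_option linter.unusedSectionVars false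



variable {D C : Type*} [Category D] [Category C]
    [HasZeroObject D] [HasZeroObject C] [Preadditive D] [Preadditive C]
    [HasShift D ℤ] [HasShift C ℤ]
    [∀ n : ℤ, (CategoryTheory.shiftFunctor D n).Additive]
    [∀ n : ℤ, (CategoryTheory.shiftFunctor C n).Additive]
    [Pretriangulated D] [Pretriangulated C]
    (G : D ⥤ C) [G.Additive] [G.CommShift ℤ] [G.IsTriangulated]

/-- cone of a `W`-map is `G`-acyclic -/
lemma isZero_G_obj₃ {T : Triangle D} (hT : T ∈ distTriang D)
    (h : IsIso (G.map T.mor₁)) : IsZero (G.obj T.obj₃) :=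
  Triangle.isZero₃_of_isIso₁ _ (G.map_distinguished _ hT) h

lemma isIso_G_map_mor₂ {T : Triangle D} (hT : T ∈ distTriang D)
    (h : IsZero (G.obj T.obj₁)) : IsIso (G.map T.mor₂) :=
  (Triangle.isZero₁_iff_isIso₂ _ (G.map_distinguished _ hT)).1 h

instance : ((MorphismProperty.isomorphisms C).inverseImage G).HasLeftCalculusOfFractions where
  toIsMultiplicative := inferInstance
  exists_leftFraction X Y φ := by
    obtain ⟨Z, u, v, hT₁⟩ := Pretriangulated.distinguished_cocone_triangle φ.s
    set T₁ := Triangle.mk φ.s u v with hT₁def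
    have hT₁inv := inv_rot_of_distTriang T₁ hT₁
    obtain ⟨Y', t, h₂, hT₂⟩ :=
      Pretriangulated.distinguished_cocone_triangle (T₁.invRotate.mor₁ ≫ φ.f)
    obtain ⟨c, hc₁, hc₂⟩ := Pretriangulated.complete_distinguished_triangle_morphism
      T₁.invRotate (Triangle.mk (T₁.invRotate.mor₁ ≫ φ.f) t h₂) hT₁inv hT₂
      (𝟙 _) φ.f (Category.id_comp _).symm
    have hWt : (MorphismProperty.isomorphisms C).inverseImage G t := by
      have hZ : IsZero (G.obj Z) := isZero_G_obj₃ G hT₁ φ.hs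
      have hZ1 : IsZero (G.obj (Z⟦(-1 : ℤ)⟧)) := by
        refine IsZero.of_iso ?_ ((G.commShiftIso (-1 : ℤ)).app Z)
        exact (shiftFunctor C (-1 : ℤ)).map_isZero hZ
      exact isIso_G_map_mor₂ G hT₂ hZ1
    refine ⟨⟨c, t, hWt⟩, ?_⟩
    dsimp at hc₁ ⊢
    exact hc₁.symm
  ext X' X Y f₁ f₂ s hs heq := by
    obtain ⟨Z, u, v, hT₁⟩ := Pretriangulated.distinguished_cocone_triangle s
    have hsub : s ≫ (f₁ - f₂) = 0 := by rw [Preadditive.comp_sub, heq, sub_self]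
    obtain ⟨g, hg⟩ := Triangle.yoneda_exact₂ _ hT₁ (f₁ - f₂) hsub
    change Z ⟶ Y at g
    replace hg : f₁ - f₂ = u ≫ g := hg
    obtain ⟨Y', t, h₂, hT₂⟩ := Pretriangulated.distinguished_cocone_triangle g
    refine ⟨Y', t, ?_, ?_⟩
    · exact isIso_G_map_mor₂ G hT₂ (isZero_G_obj₃ G hT₁ hs)
    · have h0 : (f₁ - f₂) ≫ t = 0 := by
        rw [hg, Category.assoc]
        have this : g ≫ t = 0 := comp_distTriang_mor_zero₁₂ _ hT₂
        rw [this, Limits.comp_zero]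
      rw [Preadditive.sub_comp] at h0
      exact sub_eq_zero.mp h0

instance : ((MorphismProperty.isomorphisms C).inverseImage G).IsCompatibleWithShift ℤ where
  condition a := by
    ext X Y f
    have heq : G.map (f⟦a⟧') =
        (G.commShiftIso a).hom.app X ≫ (G.map f)⟦a⟧' ≫ (G.commShiftIso a).inv.app Y := by
      have h := (G.commShiftIso a).hom.naturality f
      dsimp at h
      rw [← Category.assoc, ← h, Category.assoc, Iso.hom_inv_id_app]
      simp
    constructor
    · intro h
      have h' : IsIso (G.map (f⟦a⟧')) := h
      have h'' : IsIso ((G.map f)⟦a⟧') := by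
        have : (G.map f)⟦a⟧' =
            (G.commShiftIso a).inv.app X ≫ G.map (f⟦a⟧') ≫ (G.commShiftIso a).hom.app Y := by
          rw [heq]
          simp
        rw [this]
        infer_instance
      exact isIso_of_reflects_iso (G.map f) (shiftFunctor C a)
    · intro h
      have h' : IsIso (G.map f) := h
      show IsIso (G.map (f⟦a⟧'))
      rw [heq]
      infer_instance

instance : ((MorphismProperty.isomorphisms C).inverseImage G).IsCompatibleWithTriangulation where
  compatible_with_triangulation T₁ T₂ hT₁ hT₂ a b ha hb comm := by
    obtain ⟨c, hc₁, hc₂⟩ := Pretriangulated.complete_distinguished_triangle_morphism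
      T₁ T₂ hT₁ hT₂ a b comm
    refine ⟨c, ?_, hc₁, hc₂⟩
    have := Pretriangulated.isIso₃_of_isIso₁₂
      (G.mapTriangle.map (Triangle.homMk T₁ T₂ a b c comm hc₁ hc₂))
      (G.map_distinguished _ hT₁) (G.map_distinguished _ hT₂) (by exact ha) (by exact hb)
    exact this


section KaroubiPart


variable {C : Type*} [Category C]
    [HasZeroObject C] [Preadditive C] [HasShift C ℤ]
    [∀ n : ℤ, (CategoryTheory.shiftFunctor C n).Additive]
    [Pretriangulated C]

variable {E : Type*} [Category E]
    [HasZeroObject E] [Preadditive E] [HasShift E ℤ]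
    [∀ n : ℤ, (CategoryTheory.shiftFunctor E n).Additive]
    [Pretriangulated E]

/-- Conservativity of the Karoubi extension of a triangulated functor whose "kernel"
vanishes. -/
lemma karoubiConservative (L : E ⥤ C) [L.CommShift ℤ] [L.IsTriangulated]
    (hzero : ∀ (Z : E), IsZero (L.obj Z) → IsZero Z)
    {P N : Karoubi E} (f : P ⟶ N) (ψ : L.obj N.X ⟶ L.obj P.X)
    (hψ₁ : L.map f.f ≫ ψ = L.map P.p) (hψ₂ : ψ ≫ L.map f.f = L.map N.p) :
    IsIso f := by
  -- conservativity of `L` on `E`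
  have hconsv : ∀ {A B : E} (u : A ⟶ B), IsIso (L.map u) → IsIso u := by
    intro A B u hu
    obtain ⟨Zu, cu, du, hTu⟩ := Pretriangulated.distinguished_cocone_triangle u
    have h3 : IsZero (L.obj Zu) :=
      Triangle.isZero₃_of_isIso₁ _ (L.map_distinguished _ hTu) hu
    exact (Triangle.isZero₃_iff_isIso₁ _ hTu).1 (hzero _ h3)
  -- triangle on the underlying morphism
  obtain ⟨Z, c, d, hT⟩ := Pretriangulated.distinguished_cocone_triangle f.f
  set T := Triangle.mk f.f c d with hTdef
  -- complete `(P.p, N.p)` to an endomorphism of the triangle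
  obtain ⟨r, hr₁, hr₂⟩ := Pretriangulated.complete_distinguished_triangle_morphism
      T T hT hT P.p N.p (by show f.f ≫ N.p = P.p ≫ f.f; rw [Karoubi.comp_p, Karoubi.p_comp])
  change Z ⟶ Z at r
  -- basic commutation facts
  have hc1 : c ≫ r = N.p ≫ c := hr₁
  have hd1 : r ≫ d = d ≫ P.p⟦(1 : ℤ)⟧' := hr₂.symm
  have hp1 : P.p⟦(1 : ℤ)⟧' ≫ P.p⟦(1 : ℤ)⟧' = P.p⟦(1 : ℤ)⟧' := by
    rw [← Functor.map_comp, P.idem]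
  have hc2 : c ≫ r ≫ r = N.p ≫ c := by
    rw [← Category.assoc, hc1, Category.assoc, hc1, ← Category.assoc, N.idem]
  have hc3 : c ≫ r ≫ r ≫ r = N.p ≫ c := by
    rw [← Category.assoc, hc1, Category.assoc, hc2, ← Category.assoc, N.idem]
  have hd2 : (r ≫ r) ≫ d = d ≫ P.p⟦(1 : ℤ)⟧' := by
    rw [Category.assoc, hd1, ← Category.assoc, hd1, Category.assoc, hp1]
  have hd3 : (r ≫ r ≫ r) ≫ d = d ≫ P.p⟦(1 : ℤ)⟧' := by
    rw [Category.assoc, hd2, ← Category.assoc, hd1, Category.assoc, hp1]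
  -- the square-zero error term
  have hcn : c ≫ (r ≫ r - r) = 0 := by
    rw [Preadditive.comp_sub, hc2, hc1, sub_self]
  have hnd : (r ≫ r - r) ≫ d = 0 := by
    rw [Preadditive.sub_comp, hd2, hd1, sub_self]
  obtain ⟨a, ha⟩ := Triangle.yoneda_exact₃ T hT (r ≫ r - r) hcn
  obtain ⟨b, hb⟩ := Triangle.coyoneda_exact₃ T hT (r ≫ r - r) hnd
  change (P.X⟦(1 : ℤ)⟧) ⟶ Z at a
  change Z ⟶ N.X at b
  replace ha : r ≫ r - r = d ≫ a := ha
  replace hb : r ≫ r - r = b ≫ c := hb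
  have hn2 : (r ≫ r - r) ≫ (r ≫ r - r) = 0 := by
    nth_rewrite 1 [hb]
    rw [ha, Category.assoc, ← Category.assoc c,
      (show c ≫ d = 0 from comp_distTriang_mor_zero₂₃ _ hT), Limits.zero_comp, Limits.comp_zero]
  -- power reduction: r⁴ = r³ + r³ - r²
  have H4 : r ≫ r ≫ r ≫ r = r ≫ r ≫ r + (r ≫ r ≫ r - r ≫ r) := by
    rw [← sub_eq_zero]
    refine Eq.trans ?_ hn2
    simp only [Preadditive.sub_comp, Preadditive.comp_sub, Category.assoc]
    abel
  -- the idempotent correction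
  set Ei := r ≫ r + r ≫ r + r ≫ r - r ≫ r ≫ r - r ≫ r ≫ r with hEidef
  have hidem : Ei ≫ Ei = Ei := by
    rw [hEidef]
    simp only [Preadditive.comp_add, Preadditive.comp_sub, Preadditive.add_comp,
      Preadditive.sub_comp, Category.assoc, H4]
    abel
  have hcE : c ≫ Ei = N.p ≫ c := by
    rw [hEidef]
    simp only [Preadditive.comp_add, Preadditive.comp_sub, hc2, hc3]
    rw [add_sub_cancel_right, add_sub_cancel_right]
  have hEd : Ei ≫ d = d ≫ P.p⟦(1 : ℤ)⟧' := by
    rw [hEidef]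
    simp only [Preadditive.add_comp, Preadditive.sub_comp]
    rw [hd2, hd3]
    rw [add_sub_cancel_right, add_sub_cancel_right]
  -- `L` kills `Ei`
  have hS := L.map_distinguished T hT
  have hLq_c : L.map N.p ≫ L.map c = 0 := by
    rw [← hψ₂, Category.assoc, ← L.map_comp]
    have h0 : f.f ≫ c = 0 := comp_distTriang_mor_zero₁₂ _ hT
    rw [h0, L.map_zero, Limits.comp_zero]
  have h1 : L.map c ≫ L.map Ei = 0 := by
    rw [← L.map_comp, hcE, L.map_comp, hLq_c]
  have h2 : L.map Ei ≫ (L.mapTriangle.obj T).mor₃ = 0 := by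
    have hmor₃ : (L.mapTriangle.obj T).mor₃ =
        L.map d ≫ (L.commShiftIso (1 : ℤ)).hom.app P.X := rfl
    have hnat : L.map (P.p⟦(1 : ℤ)⟧') ≫ (L.commShiftIso (1 : ℤ)).hom.app P.X =
        (L.commShiftIso (1 : ℤ)).hom.app P.X ≫ (L.map P.p)⟦(1 : ℤ)⟧' := by
      simpa using (L.commShiftIso (1 : ℤ)).hom.naturality P.p
    have hzero31 := comp_distTriang_mor_zero₃₁ _ (L.map_distinguished T hT)
    rw [hmor₃]
    change L.map Ei ≫ L.map d ≫ (L.commShiftIso (1 : ℤ)).hom.app P.X = 0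
    rw [← Category.assoc, ← L.map_comp, hEd, L.map_comp, Category.assoc, hnat,
      ← Category.assoc, ← hψ₁, Functor.map_comp, ← Category.assoc, Category.assoc]
    have : (L.map d ≫ (L.commShiftIso (1 : ℤ)).hom.app P.X) ≫ (L.map f.f)⟦(1 : ℤ)⟧' = 0 := by
      exact hzero31
    rw [← Category.assoc, this, Limits.zero_comp]
  obtain ⟨v, hv⟩ := Triangle.coyoneda_exact₃ (L.mapTriangle.obj T)
    (L.map_distinguished T hT) (L.map Ei) h2
  change L.obj Z ⟶ L.obj N.X at v
  replace hv : L.map Ei = v ≫ L.map c := hv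
  have hLE : L.map Ei = 0 := by
    have hsq : L.map Ei = L.map Ei ≫ L.map Ei := by rw [← L.map_comp, hidem]
    rw [hsq]
    nth_rewrite 1 [hv]
    rw [Category.assoc]
    have h1' : (L.mapTriangle.obj T).mor₂ ≫ L.map Ei = 0 := h1
    rw [h1, Limits.comp_zero]
  -- hence `Ei = 0`
  have hiso : IsIso (𝟙 Z - Ei) := by
    apply hconsv
    rw [L.map_sub, L.map_id, hLE, sub_zero]
    infer_instance
  have hE0 : Ei = 0 := by
    have heq : (𝟙 Z - Ei) ≫ (𝟙 Z - Ei) = (𝟙 Z - Ei) ≫ 𝟙 Z := by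
      simp only [Preadditive.comp_sub, Preadditive.sub_comp, Category.comp_id,
        Category.id_comp, hidem]
      abel
    have h1'' := (cancel_epi (𝟙 Z - Ei)).1 heq
    have hre : Ei = 𝟙 Z - (𝟙 Z - Ei) := by abel
    rw [hre, h1'', sub_self]
  -- the two factorization conditions
  have hqc : N.p ≫ c = 0 := by rw [← hcE, hE0, Limits.comp_zero]
  have hdp : d ≫ P.p⟦(1 : ℤ)⟧' = 0 := by rw [← hEd, hE0, Limits.zero_comp]
  -- factor `N.p` through `f.f` on the right
  obtain ⟨g₁, hg₁⟩ := Triangle.coyoneda_exact₂ T hT N.p hqc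
  change N.X ⟶ P.X at g₁
  -- factor `P.p` through `f.f` on the left, using the inverse rotation
  have hcond : T.invRotate.mor₁ ≫ P.p = 0 := by
    have hdp'' : T.mor₃ ≫ (shiftFunctor E (1 : ℤ)).map P.p = 0 := hdp
    dsimp [Triangle.invRotate]
    erw [Preadditive.neg_comp, Category.assoc, neg_eq_zero]
    have hnat := (shiftEquiv E (1 : ℤ)).unitIso.inv.naturality P.p
    dsimp at hnat
    erw [← hnat]
    change (shiftFunctor E (-1)).map T.mor₃ ≫ (shiftFunctor E (-1)).map
      ((shiftFunctor E (1 : ℤ)).map P.p) ≫ (shiftEquiv E (1 : ℤ)).unitIso.inv.app P.X = 0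
    erw [← Category.assoc, ← Functor.map_comp, hdp'', Functor.map_zero,
      Limits.zero_comp]
  obtain ⟨g₂, hg₂⟩ := Triangle.yoneda_exact₂ T.invRotate (inv_rot_of_distTriang T hT)
    P.p hcond
  change N.X ⟶ P.X at g₂
  have hg₂' : P.p = f.f ≫ g₂ := hg₂
  have hg₂' : P.p = f.f ≫ g₂ := hg₂
  have hg₁' : N.p = g₁ ≫ f.f := hg₁
  -- assemble the inverse
  have hgcomm : N.p ≫ (N.p ≫ g₂ ≫ P.p) ≫ P.p = N.p ≫ g₂ ≫ P.p := by
    have h' : N.p ≫ (N.p ≫ g₂ ≫ P.p) ≫ P.p = (N.p ≫ N.p) ≫ g₂ ≫ (P.p ≫ P.p) := by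
      simp only [Category.assoc]
    rw [h', N.idem, P.idem]
  refine ⟨⟨⟨N.p ≫ g₂ ≫ P.p, hgcomm⟩, ?_, ?_⟩⟩
  · apply Karoubi.hom_ext
    show f.f ≫ N.p ≫ g₂ ≫ P.p = P.p
    rw [← Category.assoc, Karoubi.comp_p, ← Category.assoc, ← hg₂', P.idem]
  · apply Karoubi.hom_ext
    show (N.p ≫ g₂ ≫ P.p) ≫ f.f = N.p
    rw [Category.assoc, Category.assoc, Karoubi.p_comp]
    nth_rewrite 1 [hg₁']
    rw [Category.assoc, ← Category.assoc f.f g₂ f.f, ← hg₂', Karoubi.p_comp, ← hg₁']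


end KaroubiPart

end FactorKaroubiAux

/-- Let `G : D ⥤ C` be an exact functor between triangulated categories admitting a left
adjoint, with `C` idempotent complete. Then `G` factors through the idempotent completion of
the Verdier quotient `D/Ker G` (the localization at the morphisms inverted by `G`): there
is a functor `G̃ : (D/Ker G)^♮ ⥤ C` extending `G`, and `G̃` is conservative. -/
theorem factor_through_karoubi_verdier_quotient
    {D C : Type*} [Category D] [Category C]
    [HasZeroObject D] [HasZeroObject C] [Preadditive D] [Preadditive C]
    [HasShift D ℤ] [HasShift C ℤ]
    [∀ n : ℤ, (CategoryTheory.shiftFunctor D n).Additive]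
    [∀ n : ℤ, (CategoryTheory.shiftFunctor C n).Additive]
    [Pretriangulated D] [Pretriangulated C]
    [IsIdempotentComplete C]
    (F : C ⥤ D) (G : D ⥤ C) (adj : F ⊣ G)
    [F.Additive] [F.CommShift ℤ] [F.IsTriangulated]
    [G.Additive] [G.CommShift ℤ] [G.IsTriangulated] :
    ∃ G' : Karoubi ((MorphismProperty.isomorphisms C).inverseImage G).Localization ⥤ C,
      Nonempty (((MorphismProperty.isomorphisms C).inverseImage G).Q ⋙
          toKaroubi _ ⋙ G' ≅ G) ∧
        G'.ReflectsIsomorphisms := by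
  set W := (MorphismProperty.isomorphisms C).inverseImage G with hW
  have hG : W.IsInvertedBy G := fun X Y f hf => hf
  -- the lifted functor
  let L : W.Localization ⥤ C := Localization.lift G hG W.Q
  letI : Localization.Lifting W.Q W G L := inferInstance
  letI : L.CommShift ℤ := Functor.commShiftOfLocalization W.Q W ℤ G L
  letI : NatTrans.CommShift (Localization.Lifting.iso W.Q W G L).hom ℤ :=
    NatTrans.commShift_iso_hom_of_localization W.Q W ℤ G L
  haveI : W.Q.mapArrow.EssSurj := Localization.essSurj_mapArrow W.Q W
  haveI : W.Q.IsTriangulated := Triangulated.Localization.isTriangulated_functor W.Q W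
  letI : L.IsTriangulated :=
    Functor.isTriangulated_of_precomp_iso (Localization.Lifting.iso W.Q W G L)
  -- kernel vanishing
  have hzero : ∀ (Z : W.Localization), IsZero (L.obj Z) → IsZero Z := by
    intro Zl hZl
    haveI : W.Q.EssSurj := Localization.essSurj W.Q W
    obtain ⟨O, hO⟩ := Limits.HasZeroObject.zero (C := D)
    set z := W.Q.objPreimage Zl with hz
    have e' : W.Q.obj z ≅ Zl := W.Q.objObjPreimageIso Zl
    have hGz : IsZero (G.obj z) := by
      have h1 : IsZero (L.obj (W.Q.obj z)) := IsZero.of_iso hZl (L.mapIso e')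
      exact IsZero.of_iso h1 ((Localization.Lifting.iso W.Q W G L).app z).symm
    have hWφ : W (hO.to_ z) := by
      show IsIso (G.map (hO.to_ z))
      have hGO : IsZero (G.obj O) := G.map_isZero hO
      exact ⟨hGz.to_ _, hGO.eq_of_src _ _, hGz.eq_of_src _ _⟩
    have hQφ : IsIso (W.Q.map (hO.to_ z)) := Localization.inverts W.Q W _ hWφ
    have hQO : IsZero (W.Q.obj O) := W.Q.map_isZero hO
    have hQz : IsZero (W.Q.obj z) :=
      IsZero.of_iso hQO (asIso (W.Q.map (hO.to_ z))).symm
    exact IsZero.of_iso hQz e'.symm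
  -- the Karoubi extension
  let KL : Karoubi W.Localization ⥤ Karoubi C :=
    (functorExtension₂ W.Localization C).obj L
  let R : Karoubi C ⥤ C := (toKaroubiEquivalence C).inverse
  refine ⟨KL ⋙ R, ⟨?_⟩, ?_⟩
  · -- the factorization isomorphism
    refine ?_ ≪≫ Localization.Lifting.iso W.Q W G L
    calc W.Q ⋙ toKaroubi W.Localization ⋙ KL ⋙ R
        ≅ W.Q ⋙ ((toKaroubi W.Localization ⋙ KL) ⋙ R) :=
          Functor.isoWhiskerLeft W.Q (Functor.associator _ _ _).symm
      _ ≅ W.Q ⋙ ((L ⋙ toKaroubi C) ⋙ R) :=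
          Functor.isoWhiskerLeft W.Q (Functor.isoWhiskerRight
            ((functorExtension₂CompWhiskeringLeftToKaroubiIso W.Localization C).app L) R)
      _ ≅ W.Q ⋙ (L ⋙ (toKaroubi C ⋙ R)) :=
          Functor.isoWhiskerLeft W.Q (Functor.associator _ _ _)
      _ ≅ W.Q ⋙ (L ⋙ 𝟭 C) :=
          Functor.isoWhiskerLeft W.Q (Functor.isoWhiskerLeft L (toKaroubiEquivalence C).unitIso.symm)
      _ ≅ W.Q ⋙ L := Functor.isoWhiskerLeft W.Q L.rightUnitor
  · -- conservativity
    refine ⟨fun {P N} f hf => ?_⟩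
    have hf' : IsIso (KL.map f) := by
      have h : IsIso (R.map (KL.map f)) := hf
      exact isIso_of_reflects_iso (KL.map f) R
    have hψ₁ : L.map f.f ≫ (inv (KL.map f)).f = L.map P.p :=
      congrArg Karoubi.Hom.f (IsIso.hom_inv_id (KL.map f))
    have hψ₂ : (inv (KL.map f)).f ≫ L.map f.f = L.map N.p :=
      congrArg Karoubi.Hom.f (IsIso.inv_hom_id (KL.map f))
    exact FactorKaroubiAux.karoubiConservative L hzero f (inv (KL.map f)).f hψ₁ hψ₂
end

section
/- If an idempotent monad (Bousfield localization) A acts on a triangulated category C, then its Eilenberg–Moore category of algebras is equivalent to the essential image of A, which is a triangulated category when A is exact; in particular Alg(A) inherits a triangulation. -/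
open CategoryTheory Limits Pretriangulated

section Aux

variable {C : Type*} [Category C] (T : Monad C)

/-- For an idempotent monad, `T η = η T`. -/
lemma idem_map_eta (hidem : IsIso T.μ) (x : C) :
    T.map (T.η.app x) = T.η.app (T.obj x) := by
  haveI := hidem
  haveI : IsIso (T.μ.app x) := inferInstance
  rw [← cancel_mono (T.μ.app x), Monad.right_unit, Monad.left_unit]
  rfl

/-- For an idempotent monad, the unit is invertible on `T.obj y`. -/
lemma idem_isIso_eta_obj (hidem : IsIso T.μ) (y : C) :
    IsIso (T.η.app (T.obj y)) := by
  haveI := hidem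
  haveI : IsIso (T.μ.app y) := inferInstance
  have h : T.η.app (T.obj y) = inv (T.μ.app y) := by
    rw [← cancel_mono (T.μ.app y), Monad.left_unit, IsIso.inv_hom_id]
  rw [h]
  infer_instance

/-- For an idempotent monad, the unit is invertible on any object in the
essential image of `T`. -/
lemma idem_isIso_eta_of_iso (hidem : IsIso T.μ) {x y : C} (e : x ≅ T.obj y) :
    IsIso (T.η.app x) := by
  haveI := idem_isIso_eta_obj T hidem y
  have nat := T.η.naturality e.inv
  simp only [Functor.id_map] at nat
  have : T.η.app x = e.hom ≫ T.η.app (T.obj y) ≫ T.map e.inv := by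
    rw [← nat]
    simp
  rw [this]
  infer_instance

/-- For an idempotent monad, the unit is invertible on any algebra. -/
lemma idem_isIso_eta_of_algebra (hidem : IsIso T.μ) (A : T.Algebra) :
    IsIso (T.η.app A.A) := by
  refine ⟨A.a, A.unit, ?_⟩
  have nat := T.η.naturality A.a
  simp only [Functor.id_map] at nat
  rw [nat, ← idem_map_eta T hidem, ← T.map_comp, A.unit]
  simp

/-- For an idempotent monad, an invertible unit gives an algebra structure. -/
noncomputable def idemAlgebraOfIso (hidem : IsIso T.μ) (x : C)
    (hx : IsIso (T.η.app x)) : T.Algebra where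
  A := x
  a := inv (T.η.app x)
  unit := IsIso.hom_inv_id _
  assoc := by
    haveI := hidem
    haveI : IsIso (T.μ.app x) := inferInstance
    have h : T.map (inv (T.η.app x)) = T.μ.app x := by
      rw [← cancel_epi (T.map (T.η.app x)), ← T.map_comp, IsIso.hom_inv_id,
        idem_map_eta T hidem, Monad.left_unit]
      simp
    rw [h]

/-- The comparison functor from algebras of an idempotent monad to the
full subcategory of objects with invertible unit. -/
def idemFunctor (hidem : IsIso T.μ) :
    T.Algebra ⥤ ObjectProperty.FullSubcategory (fun x => IsIso (T.η.app x)) where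
  obj A := ⟨A.A, idem_isIso_eta_of_algebra T hidem A⟩
  map f := ObjectProperty.homMk f.f

/-- The comparison functor is an equivalence. -/
noncomputable def idemEquiv (hidem : IsIso T.μ) :
    T.Algebra ≌ ObjectProperty.FullSubcategory (fun x => IsIso (T.η.app x)) := by
  haveI : (idemFunctor T hidem).Faithful :=
    ⟨fun {A B} f g h => Monad.Algebra.Hom.ext (congrArg (fun k => k.hom) h)⟩
  haveI : (idemFunctor T hidem).Full := by
    refine ⟨fun {A B} g => ⟨{ f := g.hom, h := ?_ }, rfl⟩⟩
    dsimp only [idemFunctor] at g ⊢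
    haveI hA := idem_isIso_eta_of_algebra T hidem A
    haveI hB := idem_isIso_eta_of_algebra T hidem B
    have nat := T.η.naturality (show A.A ⟶ B.A from g.hom)
    simp only [Functor.id_map] at nat
    have hAa : A.a = inv (T.η.app A.A) := by
      rw [← cancel_epi (T.η.app A.A), A.unit, IsIso.hom_inv_id]
      rfl
    have hBa : B.a = inv (T.η.app B.A) := by
      rw [← cancel_epi (T.η.app B.A), B.unit, IsIso.hom_inv_id]
      rfl
    rw [hAa, hBa, ← cancel_epi (T.η.app A.A), IsIso.hom_inv_id_assoc,
      ← Category.assoc, ← nat, Category.assoc, IsIso.hom_inv_id,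
      Category.comp_id]
  haveI : (idemFunctor T hidem).EssSurj := by
    refine ⟨fun x => ⟨idemAlgebraOfIso T hidem x.1 x.2, ⟨?_⟩⟩⟩
    exact eqToIso rfl
  haveI : (idemFunctor T hidem).IsEquivalence := {}
  exact (idemFunctor T hidem).asEquivalence

end Aux

/-- If an idempotent monad (Bousfield localization) `A` acts on a triangulated category `C`
and its underlying endofunctor is exact, then its Eilenberg–Moore category of algebras is
equivalent to the essential image of `A` (the full subcategory of objects whose unit map is
invertible), and this subcategory is triangulated; in particular `Alg(A)` inherits a
triangulation. -/
theorem idempotent_monad_algebra_equiv_localObjects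
    {C : Type*} [Category C]
    [HasZeroObject C] [Preadditive C] [HasShift C ℤ]
    [∀ n : ℤ, (CategoryTheory.shiftFunctor C n).Additive] [Pretriangulated C]
    (T : Monad C) (hidem : IsIso T.μ)
    [T.toFunctor.Additive] [T.toFunctor.CommShift ℤ] [T.toFunctor.IsTriangulated] :
    Nonempty (T.Algebra ≌ ObjectProperty.FullSubcategory (fun x => IsIso (T.η.app x))) ∧
      ∃ S : ObjectProperty C, S.IsTriangulated ∧
        ∀ x : C, S x ↔ IsIso (T.η.app x) := by
  constructor
  · exact ⟨idemEquiv T hidem⟩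
  · refine ⟨fun x => IsIso (T.η.app x),
      { exists_zero := ?_, isStableUnderShiftBy := fun n => ⟨fun X hX => ?_⟩,
        ext₂' := fun Tr hTr h₁ h₃ => ObjectProperty.le_isoClosure _ _ ?_ },
      fun x => Iff.rfl⟩
    · -- zero
      open ZeroObject in
      have hz : IsZero (T.obj (0 : C)) := by
        rw [IsZero.iff_id_eq_zero, ← T.map_id,
          (isZero_zero C).eq_of_src (𝟙 (0 : C)) 0]
        simp
      exact ⟨0, isZero_zero C, ⟨0, (isZero_zero C).eq_of_src _ _, hz.eq_of_src _ _⟩⟩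
    · -- stable under shift
      change IsIso (T.η.app (X⟦n⟧))
      haveI := hX
      exact idem_isIso_eta_of_iso T hidem
        ((shiftFunctor C n).mapIso (asIso (T.η.app X)) ≪≫
          (T.toFunctor.commShiftIso n).symm.app X)
    · -- extension-closed
      change IsIso (T.η.app Tr.obj₂)
      have hTr' := T.toFunctor.map_distinguished Tr hTr
      have hX1 : IsIso (T.η.app (Tr.obj₁⟦(1:ℤ)⟧)) := by
        haveI := h₁
        exact idem_isIso_eta_of_iso T hidem
          ((shiftFunctor C (1:ℤ)).mapIso (asIso (T.η.app Tr.obj₁)) ≪≫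
            (T.toFunctor.commShiftIso (1:ℤ)).symm.app Tr.obj₁)
      set e : T.obj (Tr.obj₁⟦(1:ℤ)⟧) ⟶ (T.obj Tr.obj₁)⟦(1:ℤ)⟧ :=
        (T.toFunctor.commShiftIso (1:ℤ)).hom.app Tr.obj₁ with he
      haveI : IsIso e := by rw [he]; infer_instance
      set a : Tr.obj₁ ⟶ T.obj Tr.obj₁ :=
        (shiftFunctor C (1:ℤ)).preimage (T.η.app (Tr.obj₁⟦(1:ℤ)⟧) ≫ e) with ha
      haveI : IsIso ((shiftFunctor C (1:ℤ)).map a) := by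
        rw [ha, Functor.map_preimage]
        infer_instance
      haveI : IsIso a := isIso_of_fully_faithful (shiftFunctor C (1:ℤ)) a
      have nat := T.η.naturality Tr.mor₃
      simp only [Functor.id_map] at nat
      have comm : Tr.mor₃ ≫ a⟦(1:ℤ)⟧' = T.η.app Tr.obj₃ ≫
          (T.toFunctor.mapTriangle.obj Tr).mor₃ := by
        dsimp [Functor.mapTriangle]
        rw [ha, Functor.map_preimage, ← Category.assoc, nat, Category.assoc]
        rfl
      obtain ⟨b, hb₁, hb₂⟩ := complete_distinguished_triangle_morphism₂ Tr
        (T.toFunctor.mapTriangle.obj Tr) hTr hTr' a (T.η.app Tr.obj₃) comm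
      have hb : IsIso b := by
        refine isIso₂_of_isIso₁₃
          ({ hom₁ := a, hom₂ := b, hom₃ := T.η.app Tr.obj₃,
             comm₁ := hb₁, comm₂ := hb₂, comm₃ := comm } :
            Tr ⟶ T.toFunctor.mapTriangle.obj Tr) hTr hTr' ?_ ?_
        · exact ‹IsIso a›
        · exact h₃
      exact idem_isIso_eta_of_iso T hidem (@asIso _ _ _ _ b hb)
end
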